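/- Fix i ∈ {1,…,k} with t_i ≥ 2, d_{i−1} < d_i and c_i < c_{i+1} (with d_0 = 0, c_{k+1} = n+1), and write t = t_i, d = d_i, c = c_i. Let M be the subladder of L with the same upper outside corners and with lower outside corners (d_1,c_1),…,(d_{i−1},c_{i−1}),(d−1,c+1),(d_{i+1},c_{i+1}),…,(d_k,c_k), and set t' = (t_1,…,t_{i−1},t_i−1,t_{i+1},…,t_k). Let N = L ∖ {x_{d,c}} with lower outside corners (d_1,c_1),…,(d_{i−1},c_{i−1}),(d−1,c),(d,c+1),(d_{i+1},c_{i+1}),…,(d_k,c_k) and τ = (t_1,…,t_{i−1},t_i,t_i,t_{i+1},…,t_k). Then, regarding all ideals in K[L], one has I_{t'}(M) = I_τ(N) + Q', where Q' is the ideal generated by the (t−1)×(t−1) minors of X with rows i_1 < … < i_{t−1} < d and columns c < j_1 < … < j_{t−1} ≤ n, all of whose entries lie in L_i ∩ M. -/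
import Mathlib


open MvPolynomial

/-- The data of a two-sided ladder inside an `m × n` matrix of indeterminates,
with upper outside corners `(b i, a i)` and lower outside corners `(d j, c j)`,
together with a vector `t` of minor sizes, subject to the standing assumptions. -/
structure LadderData where
  m : ℕ
  n : ℕ
  h : ℕ
  k : ℕ
  hpos : 0 < h
  kpos : 0 < k
  hmn : m ≤ n
  b : Fin h → ℕ
  a : Fin h → ℕ
  d : Fin k → ℕ
  c : Fin k → ℕ
  t : Fin k → ℕ
  b_mono : StrictMono b
  a_mono : StrictMono a
  b_first : b ⟨0, hpos⟩ = 1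
  b_le : ∀ i, b i ≤ m
  a_pos : ∀ i, 1 ≤ a i
  a_last : a ⟨h - 1, Nat.sub_lt hpos Nat.one_pos⟩ = n
  d_mono : Monotone d
  c_mono : Monotone c
  d_pos : ∀ j, 1 ≤ d j
  d_last : d ⟨k - 1, Nat.sub_lt kpos Nat.one_pos⟩ = m
  c_first : c ⟨0, kpos⟩ = 1
  c_le : ∀ j, c j ≤ n
  corners_distinct : ∀ j j' : Fin k, d j = d j' → c j = c j' → j = j'
  t_pos : ∀ j, 1 ≤ t j
  step_d : ∀ (j : ℕ) (hj : j + 1 < k),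
    d ⟨j, Nat.lt_of_succ_lt hj⟩ + t ⟨j + 1, hj⟩ < d ⟨j + 1, hj⟩ + t ⟨j, Nat.lt_of_succ_lt hj⟩
  step_c : ∀ (j : ℕ) (hj : j + 1 < k),
    c ⟨j, Nat.lt_of_succ_lt hj⟩ + t ⟨j, Nat.lt_of_succ_lt hj⟩ < c ⟨j + 1, hj⟩ + t ⟨j + 1, hj⟩

namespace LadderData

/-- The set of positions (row, column) of the indeterminates of the ladder `L`. -/
def L (D : LadderData) : Set (ℕ × ℕ) :=
  {p | ∃ (i : Fin D.h) (j : Fin D.k),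
    D.b i ≤ p.1 ∧ p.1 ≤ D.m ∧ 1 ≤ p.2 ∧ p.2 ≤ D.a i ∧
    1 ≤ p.1 ∧ p.1 ≤ D.d j ∧ D.c j ≤ p.2 ∧ p.2 ≤ D.n}

/-- The one-sided subladder `L_j` with lower outside corner `(d j, c j)`. -/
def Lj (D : LadderData) (j : Fin D.k) : Set (ℕ × ℕ) :=
  {p ∈ D.L | p.1 ≤ D.d j ∧ D.c j ≤ p.2}

end LadderData

/-- The ideal of `K[V]` (`V` a set of positions of indeterminates) generated by the
`s × s` minors of the generic matrix all of whose entries lie in `S`. -/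
noncomputable def minorsIdeal (K : Type*) [Field K] (V S : Set (ℕ × ℕ)) (s : ℕ) :
    Ideal (MvPolynomial ↥V K) :=
  Ideal.span {f | ∃ r cc : Fin s → ℕ, StrictMono r ∧ StrictMono cc ∧
    (∀ p q, (r p, cc q) ∈ S) ∧
    ∃ hmem : ∀ p q, ((r p, cc q) : ℕ × ℕ) ∈ V,
    f = (Matrix.of fun p q =>
      (MvPolynomial.X (⟨(r p, cc q), hmem p q⟩ : V) : MvPolynomial ↥V K)).det}

/-- The mixed ladder determinantal ideal `I_t(L) = I_{t_1}(L_1) + ⋯ + I_{t_k}(L_k) ⊆ K[L]`. -/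
noncomputable def LadderData.It (D : LadderData) (K : Type*) [Field K] :
    Ideal (MvPolynomial ↥D.L K) :=
  ⨆ j : Fin D.k, minorsIdeal K D.L (D.Lj j) (D.t j)

/-- Every entry of the ladder is involved in one of the minors generating `I_t(L)`. -/
def LadderData.Nondeg (D : LadderData) : Prop :=
  ∀ p ∈ D.L, ∃ (j : Fin D.k) (r cc : Fin (D.t j) → ℕ),
    StrictMono r ∧ StrictMono cc ∧ (∀ u v, (r u, cc v) ∈ D.Lj j) ∧ ∃ u v, (r u, cc v) = p

namespace LadderData

/-- `d_{i−1}`, with the convention `d_0 = 0` (the fixed paper index `i` corresponds to the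
0-based index `i0`). -/
def dPrev (D : LadderData) (i0 : Fin D.k) : ℕ :=
  if h : 0 < (i0 : ℕ) then D.d ⟨(i0 : ℕ) - 1, by have := i0.isLt; omega⟩ else 0

/-- `c_{i+1}`, with the convention `c_{k+1} = n + 1`. -/
def cNext (D : LadderData) (i0 : Fin D.k) : ℕ :=
  if h : (i0 : ℕ) + 1 < D.k then D.c ⟨(i0 : ℕ) + 1, h⟩ else D.n + 1

/-- The ladder `N = L ∖ {x_{d,c}}`. -/
def Nset (D : LadderData) (i0 : Fin D.k) : Set (ℕ × ℕ) :=
  D.L \ {(D.d i0, D.c i0)}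

/-- The rows of the lower outside corners
`(d_1,c_1),…,(d_{i−1},c_{i−1}),(d−1,c),(d,c+1),(d_{i+1},c_{i+1}),…,(d_k,c_k)` of `N`. -/
def dN (D : LadderData) (i0 : Fin D.k) (l : Fin (D.k + 1)) : ℕ :=
  if h1 : (l : ℕ) < (i0 : ℕ) then D.d ⟨(l : ℕ), by have := i0.isLt; omega⟩
  else if (l : ℕ) = (i0 : ℕ) then D.d i0 - 1
  else if (l : ℕ) = (i0 : ℕ) + 1 then D.d i0
  else D.d ⟨(l : ℕ) - 1, by have := l.isLt; have := D.kpos; omega⟩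

/-- The columns of the lower outside corners of `N`. -/
def cN (D : LadderData) (i0 : Fin D.k) (l : Fin (D.k + 1)) : ℕ :=
  if h1 : (l : ℕ) < (i0 : ℕ) then D.c ⟨(l : ℕ), by have := i0.isLt; omega⟩
  else if (l : ℕ) = (i0 : ℕ) then D.c i0
  else if (l : ℕ) = (i0 : ℕ) + 1 then D.c i0 + 1
  else D.c ⟨(l : ℕ) - 1, by have := l.isLt; have := D.kpos; omega⟩

/-- `τ = (t_1,…,t_{i−1},t_i,t_i,t_{i+1},…,t_k)`. -/
def tN (D : LadderData) (i0 : Fin D.k) (l : Fin (D.k + 1)) : ℕ :=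
  if h1 : (l : ℕ) ≤ (i0 : ℕ) then D.t ⟨(l : ℕ), by have := i0.isLt; omega⟩
  else D.t ⟨(l : ℕ) - 1, by have := l.isLt; have := D.kpos; omega⟩

/-- The mixed ladder determinantal ideal `I_τ(N)`, regarded as an ideal of `K[L]`. -/
noncomputable def IτN (D : LadderData) (i0 : Fin D.k) (K : Type*) [Field K] :
    Ideal (MvPolynomial ↥D.L K) :=
  ⨆ l : Fin (D.k + 1),
    minorsIdeal K D.L {p ∈ D.Nset i0 | p.1 ≤ D.dN i0 l ∧ D.cN i0 l ≤ p.2} (D.tN i0 l)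

end LadderData

open Classical in
/-- The minor of the generic matrix with rows `r` and columns `cc`, with the convention
that it equals `0` whenever it involves an entry outside of `V`. -/
noncomputable def minorOrZero (K : Type*) [Field K] (V : Set (ℕ × ℕ)) {s : ℕ}
    (r cc : Fin s → ℕ) : MvPolynomial ↥V K :=
  if h : ∀ p q, ((r p, cc q) : ℕ × ℕ) ∈ V then
    (Matrix.of fun p q => (MvPolynomial.X (⟨(r p, cc q), h p q⟩ : V) : MvPolynomial ↥V K)).det
  else 0

namespace LadderData

/-- The rows of the lower outside corners of
`M = (d_1,c_1),…,(d_{i−1},c_{i−1}),(d−1,c+1),(d_{i+1},c_{i+1}),…,(d_k,c_k)`. -/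
def dM (D : LadderData) (i0 l : Fin D.k) : ℕ := if l = i0 then D.d i0 - 1 else D.d l

/-- The columns of the lower outside corners of `M`. -/
def cM (D : LadderData) (i0 l : Fin D.k) : ℕ := if l = i0 then D.c i0 + 1 else D.c l

/-- `t' = (t_1,…,t_{i−1},t_i−1,t_{i+1},…,t_k)`. -/
def tM (D : LadderData) (i0 l : Fin D.k) : ℕ := if l = i0 then D.t i0 - 1 else D.t l

/-- The subladder `M` of `L` with the same upper outside corners and with lower outside
corners `(d_1,c_1),…,(d_{i−1},c_{i−1}),(d−1,c+1),(d_{i+1},c_{i+1}),…,(d_k,c_k)`. -/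
def MsetOf (D : LadderData) (i0 : Fin D.k) : Set (ℕ × ℕ) :=
  {p ∈ D.L | ∃ l : Fin D.k, p.1 ≤ D.dM i0 l ∧ D.cM i0 l ≤ p.2}

/-- The mixed ladder determinantal ideal `I_{t'}(M)`, regarded as an ideal of `K[L]`. -/
noncomputable def ItM (D : LadderData) (i0 : Fin D.k) (K : Type*) [Field K] :
    Ideal (MvPolynomial ↥D.L K) :=
  ⨆ l : Fin D.k,
    minorsIdeal K D.L {p ∈ D.MsetOf i0 | p.1 ≤ D.dM i0 l ∧ D.cM i0 l ≤ p.2} (D.tM i0 l)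

end LadderData

/-- The ideal `Q' ⊆ K[L]` generated by the `(t−1) × (t−1)` minors of `X` with rows
`i_1 < … < i_{t−1} < d` and columns `c < j_1 < … < j_{t−1}`, all of whose entries lie in
`L_i ∩ M`. -/
noncomputable def offCornerMinorsIdeal (D : LadderData) (i0 : Fin D.k) (s : ℕ)
    (K : Type*) [Field K] : Ideal (MvPolynomial ↥D.L K) :=
  Ideal.span {f | ∃ ri js : Fin s → ℕ, StrictMono ri ∧ StrictMono js ∧
    (∀ p, ri p < D.d i0) ∧ (∀ q, D.c i0 < js q) ∧
    (∀ p q, (ri p, js q) ∈ D.Lj i0 ∩ D.MsetOf i0) ∧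
    ∃ hmem : ∀ p q, ((ri p, js q) : ℕ × ℕ) ∈ D.L,
    f = (Matrix.of fun p q =>
      (MvPolynomial.X (⟨(ri p, js q), hmem p q⟩ : D.L) : MvPolynomial ↥D.L K)).det}


section Aux

variable {K : Type*} [Field K] (D : LadderData) (i0 : Fin D.k)

lemma corner_not_mem (hd : D.dPrev i0 < D.d i0) (hc : D.c i0 < D.cNext i0) :
    ((D.d i0, D.c i0) : ℕ × ℕ) ∉ D.MsetOf i0 := by
  rintro ⟨-, l, h1, h2⟩
  simp only [LadderData.dM] at h1
  simp only [LadderData.cM] at h2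
  by_cases hl : l = i0
  · rw [if_pos hl] at h1
    have := D.d_pos i0
    omega
  · rw [if_neg hl] at h1
    rw [if_neg hl] at h2
    rcases lt_trichotomy (l : ℕ) (i0 : ℕ) with h | h | h
    · have h0 : 0 < (i0 : ℕ) := by omega
      rw [LadderData.dPrev, dif_pos h0] at hd
      have hle : D.d l ≤ D.d ⟨(i0 : ℕ) - 1, by have := i0.isLt; omega⟩ :=
        D.d_mono (by rw [Fin.le_def]; simp; omega)
      omega
    · exact hl (Fin.ext h)
    · have hik : (i0 : ℕ) + 1 < D.k := by have := l.isLt; omega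
      rw [LadderData.cNext, dif_pos hik] at hc
      have hle : D.c ⟨(i0 : ℕ) + 1, hik⟩ ≤ D.c l :=
        D.c_mono (by rw [Fin.le_def]; simp; omega)
      omega

lemma side_sets_eq (hd : D.dPrev i0 < D.d i0) (hc : D.c i0 < D.cNext i0)
    (l : Fin D.k) (hl : l ≠ i0) :
    {p ∈ D.MsetOf i0 | p.1 ≤ D.dM i0 l ∧ D.cM i0 l ≤ p.2}
      = {p ∈ D.Nset i0 | p.1 ≤ D.d l ∧ D.c l ≤ p.2} := by
  have hdM : D.dM i0 l = D.d l := if_neg hl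
  have hcM : D.cM i0 l = D.c l := if_neg hl
  rw [hdM, hcM]
  ext p
  constructor
  · rintro ⟨hM, h1, h2⟩
    refine ⟨⟨hM.1, ?_⟩, h1, h2⟩
    intro hp
    rw [Set.mem_singleton_iff] at hp
    subst hp
    exact corner_not_mem D i0 hd hc hM
  · rintro ⟨⟨hL, -⟩, h1, h2⟩
    exact ⟨⟨hL, l, by rw [hdM]; exact h1, by rw [hcM]; exact h2⟩, h1, h2⟩

lemma Q'_eq (s : ℕ) (hs1 : 1 ≤ s) :
    minorsIdeal K D.L {p ∈ D.MsetOf i0 | p.1 ≤ D.d i0 - 1 ∧ D.c i0 + 1 ≤ p.2} s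
      = offCornerMinorsIdeal D i0 s K := by
  have hdpos := D.d_pos i0
  unfold minorsIdeal offCornerMinorsIdeal
  congr 1
  ext f
  constructor
  · rintro ⟨r, cc, hr, hcc, hS, hmem, rfl⟩
    refine ⟨r, cc, hr, hcc, ?_, ?_, ?_, hmem, rfl⟩
    · intro p
      have := (hS p ⟨0, hs1⟩).2.1
      omega
    · intro q
      have := (hS ⟨0, hs1⟩ q).2.2
      omega
    · intro p q
      obtain ⟨hM, h1, h2⟩ := hS p q
      exact ⟨⟨hM.1, by omega, by omega⟩, hM⟩
  · rintro ⟨r, cc, hr, hcc, hrow, hcol, hS, hmem, rfl⟩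
    refine ⟨r, cc, hr, hcc, ?_, hmem, rfl⟩
    intro p q
    refine ⟨(hS p q).2, ?_, ?_⟩
    · have := hrow p; omega
    · have := hcol q; omega

lemma mem_Q'_of_col {s : ℕ} (u : ℕ) (hu : u = s + 1) (r cc : Fin u → ℕ)
    (hr : StrictMono r) (hcc : StrictMono cc)
    (hrow : ∀ p, r p < D.d i0) (hcol : ∀ q, D.c i0 ≤ cc q)
    (hmem : ∀ p q, ((r p, cc q) : ℕ × ℕ) ∈ D.L) :
    (Matrix.of fun p q =>
        (MvPolynomial.X (⟨(r p, cc q), hmem p q⟩ : D.L) : MvPolynomial ↥D.L K)).det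
      ∈ offCornerMinorsIdeal D i0 s K := by
  subst hu
  rw [Matrix.det_succ_column_zero]
  refine Ideal.sum_mem _ fun i _ => ?_
  refine Ideal.mul_mem_left _ _ ?_
  refine Ideal.subset_span ?_
  have hcol' : ∀ q : Fin s, D.c i0 < cc q.succ :=
    fun q => lt_of_le_of_lt (hcol 0) (hcc (Fin.succ_pos q))
  have hrow' : ∀ p : Fin s, r (i.succAbove p) < D.d i0 := fun p => hrow _
  refine ⟨r ∘ i.succAbove, cc ∘ Fin.succ, hr.comp (Fin.strictMono_succAbove i),
    hcc.comp Fin.strictMono_succ, fun p => hrow' p, fun q => hcol' q, ?_,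
    fun p q => hmem _ _, rfl⟩
  intro p q
  refine ⟨⟨hmem _ _, le_of_lt (hrow' p), hcol _⟩, hmem _ _, i0, ?_, ?_⟩
  · show (r (i.succAbove p), cc q.succ).1 ≤ D.dM i0 i0
    rw [LadderData.dM, if_pos rfl]
    have := hrow' p
    omega
  · show D.cM i0 i0 ≤ (r (i.succAbove p), cc q.succ).2
    rw [LadderData.cM, if_pos rfl]
    have := hcol' q
    omega

lemma mem_Q'_of_row {s : ℕ} (u : ℕ) (hu : u = s + 1) (r cc : Fin u → ℕ)
    (hr : StrictMono r) (hcc : StrictMono cc)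
    (hrow : ∀ p, r p ≤ D.d i0) (hcol : ∀ q, D.c i0 < cc q)
    (hmem : ∀ p q, ((r p, cc q) : ℕ × ℕ) ∈ D.L) :
    (Matrix.of fun p q =>
        (MvPolynomial.X (⟨(r p, cc q), hmem p q⟩ : D.L) : MvPolynomial ↥D.L K)).det
      ∈ offCornerMinorsIdeal D i0 s K := by
  subst hu
  rw [Matrix.det_succ_row _ (Fin.last s)]
  refine Ideal.sum_mem _ fun j _ => ?_
  refine Ideal.mul_mem_left _ _ ?_
  refine Ideal.subset_span ?_
  have hrow' : ∀ p : Fin s, r ((Fin.last s).succAbove p) < D.d i0 := by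
    intro p
    rw [Fin.succAbove_last_apply]
    exact lt_of_lt_of_le (hr (Fin.castSucc_lt_last p)) (hrow _)
  refine ⟨r ∘ (Fin.last s).succAbove, cc ∘ j.succAbove,
    hr.comp (Fin.strictMono_succAbove _), hcc.comp (Fin.strictMono_succAbove j),
    fun p => hrow' p, fun q => hcol _, ?_, fun p q => hmem _ _, rfl⟩
  intro p q
  refine ⟨⟨hmem _ _, le_of_lt (hrow' p), le_of_lt (hcol _)⟩, hmem _ _, i0, ?_, ?_⟩
  · show (r ((Fin.last s).succAbove p), cc (j.succAbove q)).1 ≤ D.dM i0 i0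
    rw [LadderData.dM, if_pos rfl]
    have := hrow' p
    omega
  · show D.cM i0 i0 ≤ (r ((Fin.last s).succAbove p), cc (j.succAbove q)).2
    rw [LadderData.cM, if_pos rfl]
    have := hcol (j.succAbove q)
    omega

end Aux

/-- **Lemma.** Fix `i` with `t_i ≥ 2`, `d_{i−1} < d_i`, `c_i < c_{i+1}` and write `t = t_i`,
`d = d_i`, `c = c_i`.  Regarding all ideals in `K[L]`, one has
`I_{t'}(M) = I_τ(N) + Q'`, where `Q'` is generated by the `(t−1) × (t−1)` minors with rows
`< d`, columns `> c` and all entries in `L_i ∩ M`. -/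
theorem ItM_eq_IτN_add_offCornerMinors (K : Type*) [Field K]
    (D : LadderData) (hnd : D.Nondeg) (i0 : Fin D.k)
    (hd : D.dPrev i0 < D.d i0) (hc : D.c i0 < D.cNext i0)
    (s : ℕ) (hs1 : 1 ≤ s) (hs : s + 1 = D.t i0) :
    D.ItM i0 K = D.IτN i0 K + offCornerMinorsIdeal D i0 s K := by
  classical
  have hdpos := D.d_pos i0
  have htpos := D.t_pos i0
  have hQ : minorsIdeal K D.L
      {p ∈ D.MsetOf i0 | p.1 ≤ D.dM i0 i0 ∧ D.cM i0 i0 ≤ p.2} (D.tM i0 i0)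
      = offCornerMinorsIdeal D i0 s K := by
    have h1 : D.dM i0 i0 = D.d i0 - 1 := if_pos rfl
    have h2 : D.cM i0 i0 = D.c i0 + 1 := if_pos rfl
    have h3 : D.tM i0 i0 = s := by
      rw [LadderData.tM, if_pos rfl]; omega
    rw [h1, h2, h3]
    exact Q'_eq D i0 s hs1
  rw [Submodule.add_eq_sup]
  have hQle : offCornerMinorsIdeal D i0 s K ≤ D.ItM i0 K := by
    rw [← hQ, LadderData.ItM]
    exact le_iSup (fun l => minorsIdeal K D.L
      {p ∈ D.MsetOf i0 | p.1 ≤ D.dM i0 l ∧ D.cM i0 l ≤ p.2} (D.tM i0 l)) i0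
  apply le_antisymm
  · rw [LadderData.ItM]
    apply iSup_le
    intro l
    by_cases hl : l = i0
    · subst hl
      rw [hQ]
      exact le_sup_right
    · refine le_trans ?_ le_sup_left
      rw [LadderData.IτN]
      have htM : D.tM i0 l = D.t l := if_neg hl
      rcases lt_or_gt_of_ne (fun h : (l : ℕ) = (i0 : ℕ) => hl (Fin.ext h)) with h | h
      · have h1 : D.dN i0 l.castSucc = D.d l := by
          rw [LadderData.dN, dif_pos (by simpa using h)]
          congr 1 <;> exact Fin.ext (by simp)
        have h2 : D.cN i0 l.castSucc = D.c l := by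
          rw [LadderData.cN, dif_pos (by simpa using h)]
          congr 1 <;> exact Fin.ext (by simp)
        have h3 : D.tN i0 l.castSucc = D.t l := by
          rw [LadderData.tN, dif_pos (by simp; omega)]
          congr 1 <;> exact Fin.ext (by simp)
        have key : minorsIdeal K D.L
            {p ∈ D.MsetOf i0 | p.1 ≤ D.dM i0 l ∧ D.cM i0 l ≤ p.2} (D.tM i0 l)
            = minorsIdeal K D.L
            {p ∈ D.Nset i0 | p.1 ≤ D.dN i0 l.castSucc ∧ D.cN i0 l.castSucc ≤ p.2}
            (D.tN i0 l.castSucc) := by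
          rw [h1, h2, h3, htM, side_sets_eq D i0 hd hc l hl]
        rw [key]
        exact le_iSup (fun l' => minorsIdeal K D.L
          {p ∈ D.Nset i0 | p.1 ≤ D.dN i0 l' ∧ D.cN i0 l' ≤ p.2} (D.tN i0 l')) l.castSucc
      · have h1 : D.dN i0 l.succ = D.d l := by
          rw [LadderData.dN, dif_neg (by simp; omega), if_neg (by simp; omega),
            if_neg (by simp; omega)]
          congr 1 <;> exact Fin.ext (by simp)
        have h2 : D.cN i0 l.succ = D.c l := by
          rw [LadderData.cN, dif_neg (by simp; omega), if_neg (by simp; omega),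
            if_neg (by simp; omega)]
          congr 1 <;> exact Fin.ext (by simp)
        have h3 : D.tN i0 l.succ = D.t l := by
          rw [LadderData.tN, dif_neg (by simp; omega)]
          congr 1 <;> exact Fin.ext (by simp)
        have key : minorsIdeal K D.L
            {p ∈ D.MsetOf i0 | p.1 ≤ D.dM i0 l ∧ D.cM i0 l ≤ p.2} (D.tM i0 l)
            = minorsIdeal K D.L
            {p ∈ D.Nset i0 | p.1 ≤ D.dN i0 l.succ ∧ D.cN i0 l.succ ≤ p.2}
            (D.tN i0 l.succ) := by
          rw [h1, h2, h3, htM, side_sets_eq D i0 hd hc l hl]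
        rw [key]
        exact le_iSup (fun l' => minorsIdeal K D.L
          {p ∈ D.Nset i0 | p.1 ≤ D.dN i0 l' ∧ D.cN i0 l' ≤ p.2} (D.tN i0 l')) l.succ
  · apply sup_le _ hQle
    rw [LadderData.IτN]
    apply iSup_le
    intro l'
    rcases lt_trichotomy (l' : ℕ) (i0 : ℕ) with h | h | h
    · -- l' < i0 : matches l = ⟨l', _⟩
      set l : Fin D.k := ⟨(l' : ℕ), by have := i0.isLt; omega⟩ with hldef
      have hl : l ≠ i0 := by
        intro he
        rw [Fin.ext_iff] at he
        simp [hldef] at he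
        omega
      have h1 : D.dN i0 l' = D.d l := by rw [LadderData.dN, dif_pos h]
      have h2 : D.cN i0 l' = D.c l := by rw [LadderData.cN, dif_pos h]
      have h3 : D.tN i0 l' = D.t l := by rw [LadderData.tN, dif_pos (by omega)]
      have htM : D.tM i0 l = D.t l := if_neg hl
      have key : minorsIdeal K D.L
          {p ∈ D.Nset i0 | p.1 ≤ D.dN i0 l' ∧ D.cN i0 l' ≤ p.2} (D.tN i0 l')
          = minorsIdeal K D.L
          {p ∈ D.MsetOf i0 | p.1 ≤ D.dM i0 l ∧ D.cM i0 l ≤ p.2} (D.tM i0 l) := by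
        rw [h1, h2, h3, side_sets_eq D i0 hd hc l hl, htM]
      rw [key, LadderData.ItM]
      exact le_iSup (fun l => minorsIdeal K D.L
        {p ∈ D.MsetOf i0 | p.1 ≤ D.dM i0 l ∧ D.cM i0 l ≤ p.2} (D.tM i0 l)) l
    · -- l' = i0 : Laplace along column 0
      refine le_trans ?_ hQle
      have h1 : D.dN i0 l' = D.d i0 - 1 := by
        rw [LadderData.dN, dif_neg (by omega), if_pos h]
      have h2 : D.cN i0 l' = D.c i0 := by
        rw [LadderData.cN, dif_neg (by omega), if_pos h]
      have h3 : D.tN i0 l' = s + 1 := by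
        rw [LadderData.tN, dif_pos (by omega)]
        have : (⟨(l' : ℕ), by have := i0.isLt; omega⟩ : Fin D.k) = i0 := Fin.ext h
        rw [this]; omega
      rw [minorsIdeal, Ideal.span_le]
      rintro f ⟨r, cc, hr, hcc, hS, hmem, rfl⟩
      refine mem_Q'_of_col D i0 (D.tN i0 l') h3 r cc hr hcc ?_ ?_ hmem
      · intro p
        have := (hS p ⟨0, by omega⟩).2.1
        rw [h1] at this
        omega
      · intro q
        have := (hS ⟨0, by omega⟩ q).2.2
        rw [h2] at this
        exact this
    · by_cases h' : (l' : ℕ) = (i0 : ℕ) + 1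
      · -- l' = i0 + 1 : Laplace along last row
        refine le_trans ?_ hQle
        have h1 : D.dN i0 l' = D.d i0 := by
          rw [LadderData.dN, dif_neg (by omega), if_neg (by omega), if_pos h']
        have h2 : D.cN i0 l' = D.c i0 + 1 := by
          rw [LadderData.cN, dif_neg (by omega), if_neg (by omega), if_pos h']
        have h3 : D.tN i0 l' = s + 1 := by
          rw [LadderData.tN, dif_neg (by omega)]
          have : (⟨(l' : ℕ) - 1, by have := l'.isLt; have := D.kpos; omega⟩ : Fin D.k)
              = i0 := Fin.ext (by simp; omega)
          rw [this]; omega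
        rw [minorsIdeal, Ideal.span_le]
        rintro f ⟨r, cc, hr, hcc, hS, hmem, rfl⟩
        refine mem_Q'_of_row D i0 (D.tN i0 l') h3 r cc hr hcc ?_ ?_ hmem
        · intro p
          have := (hS p ⟨0, by omega⟩).2.1
          rw [h1] at this
          exact this
        · intro q
          have := (hS ⟨0, by omega⟩ q).2.2
          rw [h2] at this
          omega
      · -- l' > i0 + 1 : matches l = ⟨l' - 1, _⟩
        set l : Fin D.k := ⟨(l' : ℕ) - 1, by have := l'.isLt; have := D.kpos; omega⟩
          with hldef
        have hl : l ≠ i0 := by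
          intro he
          rw [Fin.ext_iff] at he
          simp [hldef] at he
          omega
        have h1 : D.dN i0 l' = D.d l := by
          rw [LadderData.dN, dif_neg (by omega), if_neg (by omega), if_neg h']
        have h2 : D.cN i0 l' = D.c l := by
          rw [LadderData.cN, dif_neg (by omega), if_neg (by omega), if_neg h']
        have h3 : D.tN i0 l' = D.t l := by
          rw [LadderData.tN, dif_neg (by omega)]
        have htM : D.tM i0 l = D.t l := if_neg hl
        have key : minorsIdeal K D.L
            {p ∈ D.Nset i0 | p.1 ≤ D.dN i0 l' ∧ D.cN i0 l' ≤ p.2} (D.tN i0 l')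
            = minorsIdeal K D.L
            {p ∈ D.MsetOf i0 | p.1 ≤ D.dM i0 l ∧ D.cM i0 l ≤ p.2} (D.tM i0 l) := by
          rw [h1, h2, h3, side_sets_eq D i0 hd hc l hl, htM]
        rw [key, LadderData.ItM]
        exact le_iSup (fun l => minorsIdeal K D.L
          {p ∈ D.MsetOf i0 | p.1 ≤ D.dM i0 l ∧ D.cM i0 l ≤ p.2} (D.tM i0 l)) l
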